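/- Let F be a finite forest (a finite acyclic simple graph) with n vertices in which every connected component has at least 2 vertices, let D be the set of vertices of F of degree 1 or 2, and let S be a maximal independent subset of D. Then |S| ≥ n/6, and hence n − |S| ≤ (5/6)·n. -/

import Mathlib

open SimpleGraph Finset

section Aux

variable {V : Type*} [DecidableEq V] (G : SimpleGraph V)

private lemma exists_shortest_path {x r : V} (h : G.Reachable x r) :
    ∃ p : G.Walk x r, p.IsPath ∧ p.length = G.dist x r := by
  obtain ⟨w, hw⟩ := h.exists_walk_length_eq_dist
  refine ⟨w.bypass, w.bypass_isPath, le_antisymm ?_ (G.dist_le _)⟩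
  rw [← hw]; exact w.length_bypass_le

private lemma not_mem_support_of_lt {x y r : V} (p : G.Walk y r)
    (hlt : p.length < G.dist x r) : x ∉ p.support := by
  intro hx
  have h1 := G.dist_le (p.dropUntil x hx)
  have h2 := p.length_dropUntil_le hx
  omega

/-- If two neighbors of `x` are both strictly closer to `r`, they coincide. -/
private lemma eq_of_adj_dist_lt (hF : G.IsAcyclic) {x y z r : V}
    (hxy : G.Adj x y) (hxz : G.Adj x z)
    (hry : G.Reachable y r) (hrz : G.Reachable z r)
    (hy : G.dist y r < G.dist x r) (hz : G.dist z r < G.dist x r) : y = z := by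
  obtain ⟨p, hp, hpl⟩ := exists_shortest_path G hry
  obtain ⟨q, hq, hql⟩ := exists_shortest_path G hrz
  have hxp : x ∉ p.support := not_mem_support_of_lt G p (by omega)
  have hxq : x ∉ q.support := not_mem_support_of_lt G q (by omega)
  have hP : (SimpleGraph.Walk.cons hxy p).IsPath := hp.cons hxp
  have hQ : (SimpleGraph.Walk.cons hxz q).IsPath := hq.cons hxq
  have huniq := (SimpleGraph.isAcyclic_iff_path_unique.mp hF)
    (⟨SimpleGraph.Walk.cons hxy p, hP⟩ : G.Path x r) ⟨SimpleGraph.Walk.cons hxz q, hQ⟩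
  have hw : (SimpleGraph.Walk.cons hxy p) = (SimpleGraph.Walk.cons hxz q) :=
    congrArg Subtype.val huniq
  have := congrArg (fun w : G.Walk x r => w.getVert 1) hw
  simpa using this

/-- In an acyclic graph, adjacent vertices have different distances to any
common reachable vertex. -/
private lemma dist_ne_of_adj (hF : G.IsAcyclic) {x y r : V}
    (hxy : G.Adj x y) (hrx : G.Reachable x r) (hry : G.Reachable y r) :
    G.dist x r ≠ G.dist y r := by
  intro heq
  obtain ⟨p, hp, hpl⟩ := exists_shortest_path G hrx
  obtain ⟨q, hq, hql⟩ := exists_shortest_path G hry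
  have hyp : y ∉ p.support := by
    intro hy
    have h1 := G.dist_le (p.dropUntil y hy)
    have h2 := congrArg SimpleGraph.Walk.length (p.take_spec hy)
    rw [SimpleGraph.Walk.length_append] at h2
    have h3 : (p.takeUntil y hy).length = 0 := by omega
    exact hxy.ne (SimpleGraph.Walk.eq_of_length_eq_zero h3)
  have hP : (SimpleGraph.Walk.cons hxy.symm p).IsPath := hp.cons hyp
  have huniq := (SimpleGraph.isAcyclic_iff_path_unique.mp hF)
    (⟨SimpleGraph.Walk.cons hxy.symm p, hP⟩ : G.Path y r) ⟨q, hq⟩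
  have hw : (SimpleGraph.Walk.cons hxy.symm p) = q := congrArg Subtype.val huniq
  have := congrArg SimpleGraph.Walk.length hw
  simp only [SimpleGraph.Walk.length_cons] at this
  omega

/-- An acyclic graph on a finite vertex set has at most `|V|` edges. -/
private lemma acyclic_card_edgeFinset_le [Fintype V] [DecidableRel G.Adj]
    (hF : G.IsAcyclic) : G.edgeFinset.card ≤ Fintype.card V := by
  classical
  set root : V → V := fun v => Quot.out (G.connectedComponentMk v) with hrootdef
  have hroot : ∀ v, G.Reachable v (root v) := by
    intro v
    apply SimpleGraph.ConnectedComponent.exact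
    show G.connectedComponentMk v = G.connectedComponentMk (root v)
    simp [hrootdef, SimpleGraph.connectedComponentMk, Quot.out_eq]
    rfl
  have hrootadj : ∀ {x y : V}, G.Adj x y → root x = root y := by
    intro x y h
    simp only [hrootdef]
    rw [SimpleGraph.ConnectedComponent.connectedComponentMk_eq_of_adj h]
  set d : V → ℕ := fun v => G.dist v (root v) with hddef
  set P : G.Dart → Prop := fun dt => d dt.snd < d dt.fst with hPdef
  have hsub : G.edgeFinset ⊆ (Finset.univ.filter P).image SimpleGraph.Dart.edge := by
    intro e he
    induction e using Sym2.ind with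
    | _ x y =>
      rw [SimpleGraph.mem_edgeFinset, SimpleGraph.mem_edgeSet] at he
      have hrxy : root x = root y := hrootadj he
      have hne : d x ≠ d y := by
        have := dist_ne_of_adj G hF he (hroot x) (hrxy ▸ hroot y)
        simpa [hddef, hrxy] using this
      rcases lt_or_gt_of_ne hne with h | h
      · refine Finset.mem_image.mpr ⟨⟨(y, x), he.symm⟩, ?_, ?_⟩
        · simp [hPdef, h]
        · simp [SimpleGraph.Dart.edge, Sym2.eq_swap]
      · refine Finset.mem_image.mpr ⟨⟨(x, y), he⟩, ?_, ?_⟩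
        · simp [hPdef, h]
        · simp [SimpleGraph.Dart.edge]
  have hinj : Set.InjOn (fun dt : G.Dart => dt.fst) ↑(Finset.univ.filter P) := by
    intro d1 h1 d2 h2 hfst
    rw [Finset.coe_filter] at h1 h2
    have hP1 : d d1.snd < d d1.fst := h1.2
    have hP2 : d d2.snd < d d2.fst := h2.2
    have hadj1 : G.Adj d1.fst d1.snd := d1.adj
    have hadj2 : G.Adj d2.fst d2.snd := d2.adj
    replace hfst : d1.fst = d2.fst := hfst
    rw [hfst] at hadj1 hP1
    have hr1 : root d1.snd = root d2.fst := (hrootadj hadj1).symm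
    have hr2 : root d2.snd = root d2.fst := (hrootadj hadj2).symm
    have hsnd : d1.snd = d2.snd := by
      refine eq_of_adj_dist_lt G hF hadj1 hadj2 (hr1 ▸ hroot d1.snd)
        (hr2 ▸ hroot d2.snd) ?_ ?_
      · simpa [hddef, hr1] using hP1
      · simpa [hddef, hr2] using hP2
    exact SimpleGraph.Dart.ext _ _ (Prod.ext hfst hsnd)
  calc G.edgeFinset.card ≤ ((Finset.univ.filter P).image SimpleGraph.Dart.edge).card :=
        Finset.card_le_card hsub
    _ ≤ (Finset.univ.filter P).card := Finset.card_image_le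
    _ = ((Finset.univ.filter P).image (fun dt : G.Dart => dt.fst)).card :=
        (Finset.card_image_of_injOn hinj).symm
    _ ≤ Fintype.card V := Finset.card_le_univ _

end Aux

/-- In a finite forest with `n` vertices in which every connected component has
at least 2 vertices, any maximal independent subset `S` of the set `D` of
vertices of degree 1 or 2 satisfies `|S| ≥ n/6`, and hence `n - |S| ≤ (5/6)·n`. -/
theorem forest_mis_low_degree_card {V : Type*} [Fintype V] [DecidableEq V]
    (G : SimpleGraph V) [DecidableRel G.Adj]
    (hF : G.IsAcyclic)
    (hcomp : ∀ v : V, ∃ w : V, w ≠ v ∧ G.Reachable v w)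
    (D S : Finset V)
    (hD : D = Finset.univ.filter (fun v => G.degree v = 1 ∨ G.degree v = 2))
    (hSD : S ⊆ D)
    (hInd : ∀ u ∈ S, ∀ v ∈ S, ¬ G.Adj u v)
    (hMax : ∀ v ∈ D \ S, ∃ u ∈ S, G.Adj v u) :
    (Fintype.card V : ℝ) / 6 ≤ S.card ∧
    (Fintype.card V : ℝ) - S.card ≤ 5 / 6 * Fintype.card V := by
  classical
  -- every vertex has degree at least 1
  have hdeg1 : ∀ v : V, 1 ≤ G.degree v := by
    intro v
    obtain ⟨w, hw, hr⟩ := hcomp v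
    obtain ⟨p⟩ := hr
    cases p with
    | nil => exact absurd rfl hw
    | cons h _ =>
      rw [Nat.one_le_iff_ne_zero, ← Nat.pos_iff_ne_zero, G.degree_pos_iff_exists_adj]
      exact ⟨_, h⟩
  -- degree sum bound from edge count
  have hsum : ∑ v : V, G.degree v ≤ 2 * Fintype.card V := by
    rw [SimpleGraph.sum_degrees_eq_twice_card_edges]
    have := acyclic_card_edgeFinset_le G hF
    omega
  -- vertices outside D have degree ≥ 3
  have hD3 : ∀ v : V, v ∉ D → 3 ≤ G.degree v := by
    intro v hv
    subst hD
    simp only [Finset.mem_filter, Finset.mem_univ, true_and, not_or] at hv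
    have := hdeg1 v
    omega
  -- n ≤ 2 |D|
  have hnD : Fintype.card V ≤ 2 * D.card := by
    have hsplit : ∑ v : V, G.degree v = ∑ v ∈ D, G.degree v + ∑ v ∈ Dᶜ, G.degree v :=
      (Finset.sum_add_sum_compl D _).symm
    have h1 : D.card * 1 ≤ ∑ v ∈ D, G.degree v :=
      Finset.card_nsmul_le_sum D _ 1 (fun v _ => hdeg1 v)
    have h2 : Dᶜ.card * 3 ≤ ∑ v ∈ Dᶜ, G.degree v :=
      Finset.card_nsmul_le_sum Dᶜ _ 3 (fun v hv => hD3 v (by simpa using hv))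
    have h3 : Dᶜ.card = Fintype.card V - D.card := Finset.card_compl D
    have h4 : D.card ≤ Fintype.card V := Finset.card_le_univ D
    omega
  -- |D| ≤ 3 |S|
  have hDS : D.card ≤ 3 * S.card := by
    have hsub : D ⊆ S ∪ S.biUnion (fun u => G.neighborFinset u) := by
      intro v hv
      by_cases hvS : v ∈ S
      · exact Finset.mem_union_left _ hvS
      · obtain ⟨u, huS, hadj⟩ := hMax v (Finset.mem_sdiff.mpr ⟨hv, hvS⟩)
        refine Finset.mem_union_right _ (Finset.mem_biUnion.mpr ⟨u, huS, ?_⟩)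
        rw [SimpleGraph.mem_neighborFinset]
        exact hadj.symm
    have hdegS : ∀ u ∈ S, G.degree u ≤ 2 := by
      intro u hu
      have := hSD hu
      rw [hD] at this
      simp only [Finset.mem_filter] at this
      omega
    calc D.card ≤ (S ∪ S.biUnion (fun u => G.neighborFinset u)).card :=
          Finset.card_le_card hsub
      _ ≤ S.card + (S.biUnion (fun u => G.neighborFinset u)).card :=
          Finset.card_union_le _ _
      _ ≤ S.card + ∑ u ∈ S, (G.neighborFinset u).card :=
          Nat.add_le_add_left (Finset.card_biUnion_le) _
      _ ≤ S.card + ∑ u ∈ S, 2 := by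
          refine Nat.add_le_add_left (Finset.sum_le_sum ?_) _
          intro u hu
          rw [SimpleGraph.card_neighborFinset_eq_degree]
          exact hdegS u hu
      _ = S.card + S.card * 2 := by rw [Finset.sum_const, smul_eq_mul]
      _ = 3 * S.card := by ring
  have hfinal : Fintype.card V ≤ 6 * S.card := by omega
  have hreal : (Fintype.card V : ℝ) ≤ 6 * S.card := by exact_mod_cast hfinal
  constructor <;> linarith
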